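/- arXiv:math/0610312 — 3 statements merged into one kernel-verified Lean document; each statement's English description precedes it below -/
import Mathlib

section
/- Let A be a commutative Noetherian ring and M a finitely generated A-module. Then the set {H_Z^0(M) : Z ⊆ Spec A is stable under specialization} of submodules of M is finite; in fact, if M has r associated primes, this set has at most 2^r elements. -/
open CategoryTheory PrimeSpectrum
open scoped TensorProduct

universe u

section BasicDefs

variable {A : Type u} [CommRing A]

/-- A subset `Z` of `Spec A` is stable under specialization. -/
def SpecStable (Z : Set (PrimeSpectrum A)) : Prop :=
  ∀ p ∈ Z, zeroLocus (p.asIdeal : Set A) ⊆ Z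

/-- `H_Z^0(M) = {m ∈ M | Supp (A m) ⊆ Z}`, where `Supp (A m) = V(ann m)`. -/
def zTorsion (Z : Set (PrimeSpectrum A)) (M : Type u) [AddCommGroup M] [Module A M] :
    Submodule A M where
  carrier := {m | zeroLocus (Ideal.torsionOf A M m : Set A) ⊆ Z}
  zero_mem' := by
    intro p hp
    rw [Ideal.torsionOf_zero] at hp
    exact (p.isPrime.ne_top ((Ideal.eq_top_iff_one _).mpr (hp Submodule.mem_top))).elim
  add_mem' := by
    intro m m' hm hm'
    refine subset_trans (subset_trans (zeroLocus_anti_mono_ideal ?_)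
      (by rw [zeroLocus_inf])) (Set.union_subset hm hm')
    intro r hr
    obtain ⟨h1, h2⟩ := Submodule.mem_inf.mp hr
    rw [Ideal.mem_torsionOf_iff] at h1 h2 ⊢
    rw [smul_add, h1, h2, add_zero]
  smul_mem' := by
    intro a m hm
    refine subset_trans (zeroLocus_anti_mono_ideal ?_) hm
    intro r hr
    rw [Ideal.mem_torsionOf_iff] at hr ⊢
    rw [smul_comm, hr, smul_zero]

/-- The functor `M ↦ H_Z^0(M)`. -/
noncomputable def zTorsionFunctor (Z : Set (PrimeSpectrum A)) :
    ModuleCat.{u} A ⥤ ModuleCat.{u} A where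
  obj M := ModuleCat.of A (zTorsion Z M)
  map {M N} f := ModuleCat.ofHom (LinearMap.restrict f.hom (by
    intro m hm
    refine subset_trans (zeroLocus_anti_mono_ideal ?_) hm
    intro r hr
    rw [Ideal.mem_torsionOf_iff] at hr ⊢
    rw [← map_smul, hr, map_zero]))
  map_id M := by ext x; rfl
  map_comp f g := by ext x; rfl

instance (Z : Set (PrimeSpectrum A)) : (zTorsionFunctor.{u} (A := A) Z).Additive where
  map_add := by intros; ext x; rfl

/-- The local cohomology functor `H_Z^p`, defined as the `p`-th right derived functor of
the functor `H_Z^0`. -/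
noncomputable def localCohomologyZ (Z : Set (PrimeSpectrum A)) (p : ℕ) :
    ModuleCat.{u} A ⥤ ModuleCat.{u} A :=
  (zTorsionFunctor Z).rightDerived p

end BasicDefs

section Heights

variable {R : Type*} [CommRing R]

/-- `ht (p/q)`: the supremum of lengths of chains of primes from `q` to `p`. -/
noncomputable def relHeight (q p : PrimeSpectrum R) : ℕ∞ :=
  sSup {n : ℕ∞ | ∃ c : LTSeries (PrimeSpectrum R),
    c.head = q ∧ c.last = p ∧ (c.length : ℕ∞) = n}

/-- The supremum of lengths of chains of primes inside `S` ending at `p`. -/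
noncomputable def heightIn (S : Set (PrimeSpectrum R)) (p : PrimeSpectrum R) : ℕ∞ :=
  sSup {n : ℕ∞ | ∃ c : LTSeries (PrimeSpectrum R),
    (∀ i, c.toFun i ∈ S) ∧ c.last = p ∧ (c.length : ℕ∞) = n}

/-- Comparison map from `ℕ∞` to `ℤ ∪ {∞}`. -/
def eZ (x : ℕ∞) : WithTop ℤ := x.map (fun n : ℕ => (n : ℤ))

end Heights

section ModuleHeights

variable (A : Type u) [CommRing A]

/-- `ht_M p = dim M_p`, the supremum of lengths of chains of primes in `Supp M` ending at `p`. -/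
noncomputable def htM (M : Type u) [AddCommGroup M] [Module A M] (p : PrimeSpectrum A) : ℕ∞ :=
  heightIn (Module.support A M) p

/-- `ht_M b = inf { ht_M p | p ∈ Supp M ∩ V(b) }`. -/
noncomputable def htMIdeal (M : Type u) [AddCommGroup M] [Module A M] (b : Ideal A) : ℕ∞ :=
  sInf (htM A M '' (Module.support A M ∩ zeroLocus (b : Set A)))

/-- The condition (QU). -/
def SatisfiesQU (M : Type u) [AddCommGroup M] [Module A M] : Prop :=
  ∀ p q : PrimeSpectrum A, p ∈ Module.support A M → q ∈ Module.support A M → q ≤ p →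
    relHeight q p + htM A M q = htM A M p

end ModuleHeights

section Depth

variable {R : Type*} [CommRing R]

/-- The depth of a module `M` with respect to an ideal `I`: the supremum of lengths of weakly
regular sequences on `M` with entries in `I`.  (The zero module has depth `∞`.) -/
noncomputable def idealDepth (I : Ideal R) (M : Type*) [AddCommGroup M] [Module R M] : ℕ∞ :=
  sSup {n : ℕ∞ | ∃ rs : List R, (∀ r ∈ rs, r ∈ I) ∧
    RingTheory.Sequence.IsWeaklyRegular M rs ∧ (rs.length : ℕ∞) = n}

end Depth

section LocalDepth

variable (A : Type u) [CommRing A]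

/-- `depth M_q`: the depth of the localized module `M_q` over the local ring `A_q`. -/
noncomputable def primeDepth (q : PrimeSpectrum A) (M : Type u) [AddCommGroup M] [Module A M] :
    ℕ∞ :=
  idealDepth (IsLocalRing.maximalIdeal (Localization.AtPrime q.asIdeal))
    (LocalizedModule q.asIdeal.primeCompl M)

/-- `A_P` is a Cohen–Macaulay local ring: its depth equals its dimension `ht P`. -/
def IsCMLocalizationAt (R : Type*) [CommRing R] (P : PrimeSpectrum R) : Prop :=
  idealDepth (IsLocalRing.maximalIdeal (Localization.AtPrime P.asIdeal))
    (Localization.AtPrime P.asIdeal) = Order.height P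

/-- A Cohen–Macaulay ring: all localizations at primes are Cohen–Macaulay local rings. -/
def IsCMRing (R : Type*) [CommRing R] : Prop :=
  ∀ P : PrimeSpectrum R, IsCMLocalizationAt R P

end LocalDepth

section Conditions

variable (A : Type u) [CommRing A]

/-- A saturated chain of primes: each step is a covering relation. -/
def IsSaturatedChain {R : Type*} [CommRing R] (c : LTSeries (PrimeSpectrum R)) : Prop :=
  ∀ i : Fin c.length, c.toFun i.castSucc ⋖ c.toFun i.succ

/-- A catenary ring: any two saturated chains of primes with the same endpoints have the
same length. -/
def IsCatenaryRing (R : Type*) [CommRing R] : Prop :=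
  ∀ c₁ c₂ : LTSeries (PrimeSpectrum R), c₁.head = c₂.head → c₁.last = c₂.last →
    IsSaturatedChain c₁ → IsSaturatedChain c₂ → c₁.length = c₂.length

/-- (C1): `A` is universally catenary. -/
def IsUniversallyCatenary : Prop :=
  ∀ (B : Type u) [CommRing B] [Algebra A B], Algebra.FiniteType A B → IsCatenaryRing B

/-- (C2): all formal fibers of all localizations of `A` are Cohen–Macaulay:
for every prime `p`, and every prime `q` of `A_p`, the fiber ring
`(A_p)^ ⊗_{A_p} κ(q)` is a Cohen–Macaulay ring, where `(A_p)^` is the completion of `A_p`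
along its maximal ideal and `κ(q)` is the residue field of `A_p` at `q`. -/
def HasCMFormalFibers : Prop :=
  ∀ p : PrimeSpectrum A, ∀ q : PrimeSpectrum (Localization.AtPrime p.asIdeal),
    IsCMRing ((AdicCompletion (IsLocalRing.maximalIdeal (Localization.AtPrime p.asIdeal))
        (Localization.AtPrime p.asIdeal))
      ⊗[Localization.AtPrime p.asIdeal]
      (IsLocalRing.ResidueField (Localization.AtPrime q.asIdeal)))

/-- (C3): the Cohen–Macaulay locus of every finitely generated `A`-algebra is open. -/
def HasOpenCMLoci : Prop :=
  ∀ (B : Type u) [CommRing B] [Algebra A B], Algebra.FiniteType A B →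
    IsOpen {P : PrimeSpectrum B | IsCMLocalizationAt B P}

end Conditions


section AuxLemmas

variable {A : Type*} [CommRing A]


open LocalizedModule in
lemma isAssociatedPrime_of_mem_minimalPrimes [IsNoetherianRing A]
    {I q : Ideal A} (hq : q ∈ I.minimalPrimes) :
    IsAssociatedPrime q (A ⧸ I) := by
  have hqp : q.IsPrime := hq.1.1
  have hIq : I ≤ q := hq.1.2
  set S := q.primeCompl with hS
  let Aq := Localization.AtPrime q
  let L := LocalizedModule S (A ⧸ I)
  have hNoeth : IsNoetherianRing Aq := IsLocalization.isNoetherianRing S Aq inferInstance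
  have hsm : ∀ (a : A) (z : A ⧸ I), a • z = Ideal.Quotient.mk I a * z := fun a z => by
    rw [Algebra.smul_def, Ideal.Quotient.algebraMap_eq]
  have hzero : ∀ (z : A ⧸ I) (s : S), (mk z s : L) = 0 ↔ ∃ u : S, (u : A) • z = 0 := by
    intro z s
    rw [show (0 : L) = mk 0 1 from (zero_mk 1).symm, mk_eq]
    constructor
    · rintro ⟨u, hu⟩
      simp only [one_smul, smul_zero, Submonoid.smul_def] at hu
      exact ⟨u, hu⟩
    · rintro ⟨u, hu⟩
      refine ⟨u, ?_⟩
      simp only [one_smul, smul_zero, Submonoid.smul_def]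
      exact hu
  have hnt : Nontrivial L := by
    refine ⟨mk (Ideal.Quotient.mk I 1) 1, 0, fun h => ?_⟩
    obtain ⟨u, hu⟩ := (hzero _ _).mp h
    rw [hsm, map_one, mul_one, Ideal.Quotient.eq_zero_iff_mem] at hu
    exact u.2 (hIq hu)
  obtain ⟨P, hP⟩ := associatedPrimes.nonempty Aq L
  obtain ⟨hPprime, x, hx⟩ := isAssociatedPrime_iff.mp hP
  obtain ⟨⟨z, s⟩, rfl⟩ : ∃ y : (A ⧸ I) × S, mk y.1 y.2 = x := by
    induction x using LocalizedModule.induction_on with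
    | h z s => exact ⟨⟨z, s⟩, rfl⟩
  simp only at hx
  -- the comap of P is q
  have hmem : ∀ a : A, algebraMap A Aq a ∈ P ↔ (mk (a • z) s : L) = 0 := by
    intro a
    rw [hx, Submodule.mem_colon_singleton, Submodule.mem_bot, algebraMap_smul, smul'_mk]
  have h1 : P.comap (algebraMap A Aq) ≤ q := by
    intro a ha
    rw [Ideal.mem_comap] at ha
    by_contra h
    exact hPprime.ne_top (Ideal.eq_top_of_isUnit_mem _ ha
      (IsLocalization.map_units Aq (⟨a, h⟩ : S)))
  have h2 : I ≤ P.comap (algebraMap A Aq) := by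
    intro a ha
    rw [Ideal.mem_comap, hmem]
    have : a • z = 0 := by
      rw [hsm, Ideal.Quotient.eq_zero_iff_mem.mpr ha, zero_mul]
    rw [this, zero_mk]
  have hcomap : P.comap (algebraMap A Aq) = q :=
    le_antisymm h1 (hq.2 ⟨Ideal.IsPrime.comap _, h2⟩ h1)
  -- generators of q
  classical
  obtain ⟨T, hT⟩ : q.FG := (isNoetherianRing_iff_ideal_fg A).mp ‹_› q
  have hkill : ∀ b ∈ T, ∃ u : S, (u : A) • (b • z) = 0 := by
    intro b hb
    have hbq : b ∈ q := hT ▸ Ideal.subset_span hb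
    have : algebraMap A Aq b ∈ P := by rw [← hcomap] at hbq; exact hbq
    exact (hzero _ _).mp ((hmem b).mp this)
  choose u hu using hkill
  set tA : A := ∏ b ∈ T.attach, (u b b.2 : A) with htA
  have htS : tA ∈ S := S.prod_mem (fun b _ => (u b b.2).2)
  set X : A ⧸ I := Ideal.Quotient.mk I tA * z with hX
  refine isAssociatedPrime_iff.mpr ⟨hqp, X, ?_⟩
  ext a
  rw [Submodule.mem_colon_singleton, Submodule.mem_bot]
  constructor
  · intro haq
    have key : ∀ b ∈ T, b • X = 0 := by
      intro b hb
      have hbt : b * tA = (∏ c ∈ T.attach.erase ⟨b, hb⟩, (u c c.2 : A)) * ((u b hb : A) * b) := by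
        rw [htA, ← Finset.mul_prod_erase T.attach (fun c => (u c c.2 : A))
          (Finset.mem_attach T ⟨b, hb⟩)]
        ring
      rw [hX, ← hsm, ← mul_smul, hbt, mul_smul, mul_smul, hu, smul_zero]
    have hle : q ≤ Ideal.torsionOf A (A ⧸ I) X := by
      rw [← hT, Ideal.span_le]
      intro b hb
      exact (Ideal.mem_torsionOf_iff X b).mpr (key b hb)
    exact (Ideal.mem_torsionOf_iff X a).mp (hle haq)
  · intro ha
    have h0 : (a * tA) • z = 0 := by
      rw [mul_smul, hsm tA z, ← hX, ha]
    have hmk : (mk ((a * tA) • z) s : L) = 0 := by rw [h0, zero_mk]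
    have hP2 : algebraMap A Aq (a * tA) ∈ P := (hmem _).mpr hmk
    rw [map_mul] at hP2
    rcases hPprime.mem_or_mem hP2 with h | h
    · exact hcomap ▸ Ideal.mem_comap.mpr h
    · exact absurd (hcomap ▸ Ideal.mem_comap.mpr h) htS

lemma assPrimes_subset_union [IsNoetherianRing A] {M : Type*} [AddCommGroup M] [Module A M] (N : Submodule A M) :
    associatedPrimes A M ⊆ associatedPrimes A N ∪ associatedPrimes A (M ⧸ N) := by
  rintro p hp'
  obtain ⟨hp, x, hx⟩ := isAssociatedPrime_iff.mp hp'
  by_cases hcase : ∀ a : A, a • x ∈ N → a • x = 0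
  · right
    refine isAssociatedPrime_iff.mpr ⟨hp, N.mkQ x, ?_⟩
    ext b
    rw [Submodule.mem_colon_singleton, Submodule.mem_bot, ← map_smul, Submodule.mkQ_apply,
      Submodule.Quotient.mk_eq_zero]
    rw [hx, Submodule.mem_colon_singleton, Submodule.mem_bot]
    exact ⟨fun h => h ▸ N.zero_mem, hcase b⟩
  · left
    push_neg at hcase
    obtain ⟨a, haN, ha0⟩ := hcase
    have hap : a ∉ p := by
      rw [hx, Submodule.mem_colon_singleton, Submodule.mem_bot]
      exact ha0
    refine isAssociatedPrime_iff.mpr ⟨hp, ⟨a • x, haN⟩, ?_⟩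
    ext b
    rw [Submodule.mem_colon_singleton, Submodule.mem_bot]
    have : (b • (⟨a • x, haN⟩ : N) = 0) ↔ (b * a) • x = 0 := by
      rw [mul_smul, ← Subtype.coe_inj]
      rfl
    rw [this, ← Submodule.mem_bot A, ← Submodule.mem_colon_singleton, ← hx]
    exact ⟨fun h => p.mul_mem_right a h,
      fun h => (hp.mem_or_mem h).resolve_right hap⟩

lemma associatedPrimes_finite_aux [IsNoetherianRing A] {M : Type*} [AddCommGroup M] [Module A M]
    [IsNoetherian A M] : ∀ N : Submodule A M, (associatedPrimes A (M ⧸ N)).Finite := by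
  have wf : WellFounded ((· > ·) : Submodule A M → Submodule A M → Prop) :=
    (isNoetherian_iff (R := A) (M := M)).mp inferInstance
  intro N
  induction N using wf.induction with
  | h N IH =>
    by_cases hsub : N = ⊤
    · have : Subsingleton (M ⧸ N) := Submodule.Quotient.subsingleton_iff.mpr hsub
      rw [associatedPrimes.eq_empty_of_subsingleton]
      exact Set.finite_empty
    · have hnt : Nontrivial (M ⧸ N) := Submodule.Quotient.nontrivial_iff.mpr hsub
      obtain ⟨p, hp'⟩ := associatedPrimes.nonempty A (M ⧸ N)
      obtain ⟨hp, xbar, hx⟩ := isAssociatedPrime_iff.mp hp'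
      obtain ⟨x, rfl⟩ := N.mkQ_surjective xbar
      have hxne : N.mkQ x ≠ 0 := by
        intro h
        rw [h] at hx
        replace hx : p = ⊤ := by
          rw [hx, eq_top_iff]
          intro b _
          rw [Submodule.mem_colon_singleton, smul_zero]
          exact Submodule.zero_mem _
        exact hp.ne_top hx
      set N' : Submodule A M := N ⊔ Submodule.span A {x} with hN'
      have hlt : N < N' := by
        refine lt_of_le_of_ne le_sup_left (fun h => hxne ?_)
        have hxN : x ∈ N := by
          rw [h]
          exact Submodule.mem_sup_right (Submodule.mem_span_singleton_self x)
        rwa [Submodule.mkQ_apply, Submodule.Quotient.mk_eq_zero]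
      set S' : Submodule A (M ⧸ N) := Submodule.span A {N.mkQ x} with hS'
      have htor : Ideal.torsionOf A (M ⧸ N) (N.mkQ x) = p := by
        ext b
        rw [Ideal.mem_torsionOf_iff, hx, Submodule.mem_colon_singleton, Submodule.mem_bot]
      have hfin1 : (associatedPrimes A S').Finite := by
        have e := Ideal.quotTorsionOfEquivSpanSingleton A (M ⧸ N) (N.mkQ x)
        rw [htor] at e
        rw [hS', show Submodule.span A {N.mkQ x} = A ∙ N.mkQ x from rfl,
          ← LinearEquiv.AssociatedPrimes.eq e,
          associatedPrimes.eq_singleton_of_isPrimary hp.isPrimary]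
        exact Set.finite_singleton _
      have hmap : S' = N'.map N.mkQ := by
        rw [hS', hN', Submodule.map_sup, Submodule.map_span, Set.image_singleton]
        have : N.map N.mkQ = ⊥ := by
          rw [eq_bot_iff, Submodule.map_le_iff_le_comap, Submodule.comap_bot, Submodule.ker_mkQ]
        rw [this, bot_sup_eq, Submodule.mkQ_apply]
      have hfin2 : (associatedPrimes A ((M ⧸ N) ⧸ S')).Finite := by
        have e : ((M ⧸ N) ⧸ S') ≃ₗ[A] (M ⧸ N') := by
          rw [hmap]
          exact Submodule.quotientQuotientEquivQuotient N N' le_sup_left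
        rw [LinearEquiv.AssociatedPrimes.eq e]
        exact IH N' hlt
      exact Set.Finite.subset (hfin1.union hfin2) (assPrimes_subset_union S')

lemma associatedPrimes_finite [IsNoetherianRing A] (M : Type*) [AddCommGroup M] [Module A M]
    [Module.Finite A M] : (associatedPrimes A M).Finite := by
  have := isNoetherian_of_isNoetherianRing_of_finite A M
  have e : (M ⧸ (⊥ : Submodule A M)) ≃ₗ[A] M := Submodule.quotEquivOfEqBot ⊥ rfl
  rw [← LinearEquiv.AssociatedPrimes.eq e]
  exact associatedPrimes_finite_aux ⊥


lemma Set.powerset_insert' {α : Type*} (a : α) (s : Set α) :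
    𝒫 (insert a s) = 𝒫 s ∪ (insert a) '' 𝒫 s := by
  ext t
  simp only [Set.mem_powerset_iff, Set.mem_union, Set.mem_image]
  constructor
  · intro ht
    by_cases hat : a ∈ t
    · refine Or.inr ⟨t \ {a}, fun y hy => (ht hy.1).resolve_left hy.2, ?_⟩
      rw [Set.insert_diff_singleton, Set.insert_eq_of_mem hat]
    · exact Or.inl (fun y hy => (ht hy).resolve_left (fun h => hat (h ▸ hy)))
  · rintro (h | ⟨u, hu, rfl⟩)
    · exact h.trans (Set.subset_insert a s)
    · exact Set.insert_subset_insert hu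

lemma ncard_powerset_le {α : Type*} {s : Set α} (hs : s.Finite) :
    (𝒫 s).ncard ≤ 2 ^ s.ncard := by
  induction s, hs using Set.Finite.induction_on with
  | empty =>
    rw [Set.powerset_empty, Set.ncard_singleton, Set.ncard_empty, pow_zero]
  | insert ha hs IH =>
    rw [Set.ncard_insert_of_notMem ha hs, Set.powerset_insert', pow_succ, mul_two]
    refine le_trans (Set.ncard_union_le _ _) (Nat.add_le_add (IH) ?_)
    exact le_trans (Set.ncard_image_le hs.powerset) IH

end AuxLemmas

/-- (Lemma 2.2, after Raghavan)  For a finitely generated module `M` over a Noetherian ring `A`,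
the set `{H_Z^0(M) | Z ⊆ Spec A stable under specialization}` of submodules of `M` is finite,
of cardinality at most `2 ^ r` where `r` is the number of associated primes of `M`. -/
theorem finiteness_of_zTorsion_submodules
    (A : Type u) [CommRing A] [IsNoetherianRing A]
    (M : Type u) [AddCommGroup M] [Module A M] [Module.Finite A M]
    (r : ℕ) (hr : (associatedPrimes A M).ncard = r) :
    Set.Finite {N : Submodule A M |
        ∃ Z : Set (PrimeSpectrum A), SpecStable Z ∧ zTorsion Z M = N} ∧
      Set.ncard {N : Submodule A M |
        ∃ Z : Set (PrimeSpectrum A), SpecStable Z ∧ zTorsion Z M = N} ≤ 2 ^ r := by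
    classical
  have hAss : (associatedPrimes A M).Finite := associatedPrimes_finite M
  have hinj : Function.Injective (PrimeSpectrum.asIdeal (R := A)) := by
    intro p q h
    cases p; cases q; simpa using h
  set AssP : Set (PrimeSpectrum A) := {p | p.asIdeal ∈ associatedPrimes A M} with hAssP
  have hAssPfin : AssP.Finite :=
    Set.Finite.preimage (Set.injOn_of_injective hinj) hAss
  have hAssPcard : AssP.ncard = r := by
    rw [← hr]
    have himg : PrimeSpectrum.asIdeal '' AssP = associatedPrimes A M := by
      apply le_antisymm
      · rintro _ ⟨p, hp, rfl⟩
        exact hp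
      · intro J hJ
        exact ⟨⟨J, hJ.isPrime⟩, hJ, rfl⟩
    rw [← himg, Set.ncard_image_of_injective _ hinj]
  have key : ∀ Z : Set (PrimeSpectrum A), SpecStable Z →
      zTorsion Z M = zTorsion (⋃ p ∈ Z ∩ AssP, zeroLocus (p.asIdeal : Set A)) M := by
    intro Z hZ
    apply le_antisymm
    · intro m hm
      have hm' : zeroLocus ((Ideal.torsionOf A M m : Ideal A) : Set A) ⊆ Z := hm
      intro P hP
      have hle : Ideal.torsionOf A M m ≤ P.asIdeal := by
        have := (PrimeSpectrum.mem_zeroLocus _ _).mp hP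
        exact fun a ha => this ha
      haveI : P.asIdeal.IsPrime := P.2
      obtain ⟨q, hqmin, hqle⟩ := Ideal.exists_minimalPrimes_le hle
      have hqass : q ∈ associatedPrimes A M := by
        have h1 : IsAssociatedPrime q (A ⧸ Ideal.torsionOf A M m) :=
          isAssociatedPrime_of_mem_minimalPrimes hqmin
        have h2 : q ∈ associatedPrimes A (A ⧸ Ideal.torsionOf A M m) := h1
        rw [LinearEquiv.AssociatedPrimes.eq (Ideal.quotTorsionOfEquivSpanSingleton A M m)] at h2
        exact associatedPrimes.subset_of_injective
          (Submodule.injective_subtype _) h2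
      set qP : PrimeSpectrum A := ⟨q, hqmin.1.1⟩ with hqP
      have hqZ : qP ∈ Z := hm' ((PrimeSpectrum.mem_zeroLocus _ _).mpr
        (fun a ha => hqmin.1.2 ha))
      exact Set.mem_biUnion (Set.mem_inter hqZ hqass)
        ((PrimeSpectrum.mem_zeroLocus _ _).mpr (fun a ha => hqle ha))
    · intro m hm
      refine Set.Subset.trans hm ?_
      refine Set.iUnion₂_subset ?_
      rintro p ⟨hpZ, -⟩
      exact hZ p hpZ
  have hsubset : {N : Submodule A M | ∃ Z : Set (PrimeSpectrum A),
        SpecStable Z ∧ zTorsion Z M = N} ⊆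
      (fun T : Set (PrimeSpectrum A) =>
        zTorsion (⋃ p ∈ T, zeroLocus (p.asIdeal : Set A)) M) '' 𝒫 AssP := by
    rintro N ⟨Z, hZ, rfl⟩
    refine ⟨Z ∩ AssP, fun p hp => hp.2, ?_⟩
    exact (key Z hZ).symm
  have himfin : ((fun T : Set (PrimeSpectrum A) =>
      zTorsion (⋃ p ∈ T, zeroLocus (p.asIdeal : Set A)) M) '' 𝒫 AssP).Finite :=
    hAssPfin.powerset.image _
  refine ⟨himfin.subset hsubset, ?_⟩
  calc Set.ncard {N : Submodule A M | ∃ Z : Set (PrimeSpectrum A),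
          SpecStable Z ∧ zTorsion Z M = N}
      ≤ ((fun T : Set (PrimeSpectrum A) =>
          zTorsion (⋃ p ∈ T, zeroLocus (p.asIdeal : Set A)) M) '' 𝒫 AssP).ncard :=
        Set.ncard_le_ncard hsubset himfin
    _ ≤ (𝒫 AssP).ncard := Set.ncard_image_le hAssPfin.powerset
    _ ≤ 2 ^ AssP.ncard := ncard_powerset_le hAssPfin
    _ = 2 ^ r := by rw [hAssPcard]
end

section
/- Let A be a commutative Noetherian ring, M a finitely generated A-module with Ass M = {p_1, …, p_r}, and let 0 = M_1 ∩ … ∩ M_r be a primary decomposition of 0 in M with Ass(M/M_i) = {p_i} for each i. Then for every subset Z of Spec A stable under specialization, H_Z^0(M) = ⋂_{i : p_i ∉ Z} M_i. -/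
open CategoryTheory PrimeSpectrum
open scoped TensorProduct

universe u

lemma aux_pow_smul {R : Type*} [CommRing R] [IsNoetherianRing R] {M : Type*} [AddCommGroup M]
    [Module R M] {P : Ideal R} (hP : associatedPrimes R M = {P}) {a : R} (ha : a ∈ P) (x : M) :
    ∃ n : ℕ, a ^ n • x = 0 := by
  by_contra hcon
  push_neg at hcon
  have mono : Monotone fun n : ℕ => (R ∙ (a ^ n • x)).annihilator := by
    intro n m hnm r hr
    obtain ⟨k, rfl⟩ := Nat.exists_eq_add_of_le hnm
    rw [Submodule.mem_annihilator_span_singleton] at hr ⊢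
    rw [pow_add, mul_comm, mul_smul, smul_comm, hr, smul_zero]
  obtain ⟨Nn, hN⟩ := monotone_stabilizes_iff_noetherian.mpr inferInstance
    ⟨fun n : ℕ => (R ∙ (a ^ n • x)).annihilator, mono⟩
  set y := a ^ Nn • x with hy
  have hyne : y ≠ 0 := hcon Nn
  have key : ∀ s : R, a • (s • y) = 0 → s • y = 0 := by
    intro s hs
    have hay : a ^ (Nn + 1) • x = a • y := by rw [hy, pow_succ', mul_smul]
    have h1 : s ∈ (R ∙ (a ^ (Nn + 1) • x)).annihilator := by
      rw [Submodule.mem_annihilator_span_singleton, hay, smul_comm]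
      exact hs
    have hN' : ∀ m, Nn ≤ m →
        (R ∙ (a ^ Nn • x)).annihilator = (R ∙ (a ^ m • x)).annihilator := hN
    have h2 : s ∈ (R ∙ (a ^ Nn • x)).annihilator := by
      rw [hN' (Nn + 1) (Nat.le_succ _)]; exact h1
    rwa [Submodule.mem_annihilator_span_singleton] at h2
  have : Nontrivial ↥(R ∙ y) :=
    nontrivial_of_ne ⟨y, Submodule.mem_span_singleton_self y⟩ 0
      (fun h => hyne (congrArg Subtype.val h))
  obtain ⟨P', hP'⟩ := associatedPrimes.nonempty R ↥(R ∙ y)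
  have hP'M : P' ∈ associatedPrimes R M :=
    associatedPrimes.subset_of_injective (Submodule.injective_subtype (R ∙ y)) hP'
  rw [hP, Set.mem_singleton_iff] at hP'M
  subst hP'M
  obtain ⟨hp', z, hz⟩ := hP'
  obtain ⟨s, hs⟩ := Submodule.mem_span_singleton.mp z.2
  have haz : a • z = 0 := by
    have hgen : ∀ k : ℕ, ∀ t : R, a ^ k • (t • y) = 0 → t • y = 0 := by
      intro k
      induction k with
      | zero => intro t h; simpa using h
      | succ k ih =>
        intro t h
        apply key
        rw [smul_smul]
        apply ih
        rwa [mul_smul, ← mul_smul, ← pow_succ]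
    have := hz ▸ ha
    obtain ⟨k, hk⟩ := this
    rw [Submodule.mem_colon_singleton, Submodule.mem_bot] at hk
    have h1 : a ^ k • (s • y) = 0 := by rw [hs]; exact congrArg Subtype.val hk
    have h2 := hgen k s h1
    apply Subtype.ext
    simp only [Submodule.coe_smul, ← hs, h2, smul_zero, Submodule.coe_zero]
  have hsy : a • (s • y) = 0 := by
    rw [hs]
    exact congrArg Subtype.val haz
  have hz0 : z = 0 := Subtype.ext (by rw [← hs]; exact key s hsy)
  replace hz : P' = ⊤ := by
    rw [hz, hz0, Ideal.radical_eq_top, Ideal.eq_top_iff_one, Submodule.mem_colon_singleton,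
      smul_zero]
    exact Submodule.zero_mem _
  exact hp'.ne_top hz

/-- If `Ass M = {p_1, …, p_r}` and `0 = M_1 ∩ ⋯ ∩ M_r` is a primary decomposition of `0` in `M`
with `Ass (M/M_i) = {p_i}`, then for every specialization-stable `Z ⊆ Spec A` one has
`H_Z^0(M) = ⋂_{p_i ∉ Z} M_i`. -/
theorem zTorsion_eq_iInf_of_primary_decomposition
    (A : Type u) [CommRing A] [IsNoetherianRing A]
    (M : Type u) [AddCommGroup M] [Module A M] [Module.Finite A M]
    (r : ℕ) (p : Fin r → PrimeSpectrum A) (hp : Function.Injective p)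
    (hAss : associatedPrimes A M = Set.range fun i => (p i).asIdeal)
    (N : Fin r → Submodule A M) (hdec : ⨅ i, N i = ⊥)
    (hprim : ∀ i, associatedPrimes A (M ⧸ N i) = {(p i).asIdeal})
    (Z : Set (PrimeSpectrum A)) (hZ : SpecStable Z) :
    zTorsion Z M = ⨅ (i : Fin r) (_ : p i ∉ Z), N i := by
  apply le_antisymm
  · intro m hm
    simp only [Submodule.mem_iInf]
    intro i hiZ
    by_contra hmN
    have hm' : (Submodule.Quotient.mk m : M ⧸ N i) ≠ 0 := by
      simpa [Submodule.Quotient.mk_eq_zero] using hmN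
    obtain ⟨P, hP, hle⟩ := exists_le_isAssociatedPrime_of_isNoetherianRing A
      (Submodule.Quotient.mk m : M ⧸ N i) hm'
    have hPi : P = (p i).asIdeal := by
      have h := hP
      change P ∈ associatedPrimes A (M ⧸ N i) at h
      rw [hprim i, Set.mem_singleton_iff] at h
      exact h
    refine hiZ (hm ?_)
    rw [mem_zeroLocus]
    intro s hs
    rw [SetLike.mem_coe, Ideal.mem_torsionOf_iff] at hs
    rw [SetLike.mem_coe, ← hPi]
    apply hle
    rw [Submodule.mem_colon_singleton, ← Submodule.Quotient.mk_smul, hs]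
    simp
  · intro m hm
    rw [Submodule.mem_iInf] at hm
    show zeroLocus ((Ideal.torsionOf A M m : Ideal A) : Set A) ⊆ Z
    intro q hq
    rw [mem_zeroLocus] at hq
    have hq' : Ideal.torsionOf A M m ≤ q.asIdeal := hq
    have hinf : (⨅ i, (N i).colon (Submodule.span A {m})) ≤ Ideal.torsionOf A M m := by
      intro s hs
      rw [Ideal.mem_torsionOf_iff]
      have h1 : s • m ∈ ⨅ i, N i := by
        rw [Submodule.mem_iInf]
        intro i
        exact Submodule.mem_colon_span_singleton.mp ((Submodule.mem_iInf _).mp hs i)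
      rw [hdec] at h1
      exact h1
    have hprod : (∏ i, (N i).colon (Submodule.span A {m})) ≤ q.asIdeal := by
      refine le_trans ?_ (le_trans hinf hq')
      exact le_trans Ideal.prod_le_inf (le_iInf fun i => Finset.inf_le (Finset.mem_univ i))
    obtain ⟨i, -, hcol⟩ := (q.isPrime.prod_le).mp hprod
    have hmNi : m ∉ N i := by
      intro hmem
      refine q.isPrime.ne_top (top_le_iff.mp (le_trans ?_ hcol))
      intro s _
      exact Submodule.mem_colon_span_singleton.mpr (Submodule.smul_mem _ s hmem)
    have hpiZ : p i ∈ Z := by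
      by_contra hpi
      exact hmNi ((Submodule.mem_iInf _).mp (hm i) hpi)
    apply hZ (p i) hpiZ
    rw [mem_zeroLocus]
    intro a hapi
    obtain ⟨n, hn⟩ := aux_pow_smul (hprim i) hapi (Submodule.Quotient.mk m : M ⧸ N i)
    have hanq : a ^ n ∈ q.asIdeal := hcol (Submodule.mem_colon_span_singleton.mpr (by
      rwa [← Submodule.Quotient.mk_smul, Submodule.Quotient.mk_eq_zero] at hn))
    exact q.isPrime.mem_of_pow_mem n hanq
end

section
/- Let A be a commutative Noetherian ring, M a finitely generated A-module, and 0 → F^{-n} → F^{-n+1} → … → F^{-1} → F^0 a complex of finitely generated free A-modules with differentials f^i : F^i → F^{i+1} satisfying (a) rank f^{-n} = rank F^{-n}, (b) rank F^i = rank f^i + rank f^{i-1} for each −n < i < 0, and (c) ht_M I_{r_i}(f^i) ≥ −i for each −n ≤ i < 0, where r_i = rank f^i and I_{r_i}(f^i) is the ideal of r_i × r_i minors of f^i. Then for every prime p ∈ Supp M with h = ht_M p and 0 ≤ h < n, the localized complex 0 → (F^{-n})_p → … → (F^{-h})_p is split exact; consequently, for every A_p-module T, H^q(F^• ⊗_A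 T) = 0 for all q < −h. -/
open CategoryTheory PrimeSpectrum
open scoped TensorProduct

universe u

section MatrixComplex

variable {A : Type u} [CommRing A]

/-- The ideal generated by the `r × r` minors of a matrix. -/
def minorsIdeal {a b : ℕ} (r : ℕ) (X : Matrix (Fin a) (Fin b) A) : Ideal A :=
  Ideal.span {d | ∃ (ri : Fin r → Fin a) (ci : Fin r → Fin b),
    Function.Injective ri ∧ Function.Injective ci ∧ d = (X.submatrix ri ci).det}

/-- The rank of a matrix over a commutative ring: the largest `r` such that the ideal of
`r × r` minors is nonzero. -/
noncomputable def matrixRank {a b : ℕ} (X : Matrix (Fin a) (Fin b) A) : ℕ :=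
  sSup {r | minorsIdeal r X ≠ ⊥}

/-- The `A`-linear map `(Fin a → M) → (Fin b → M)` induced by a matrix with entries in `A`;
this is the matrix map `A^a → A^b` tensored with `M`. -/
def matVecMap {a b : ℕ} (X : Matrix (Fin b) (Fin a) A) (M : Type u)
    [AddCommGroup M] [Module A M] : (Fin a → M) →ₗ[A] (Fin b → M) where
  toFun v i := ∑ j, X i j • v j
  map_add' v w := by
    funext i
    simp [smul_add, Finset.sum_add_distrib]
  map_smul' c v := by
    funext i
    simp only [RingHom.id_apply, Pi.smul_apply, Finset.smul_sum]
    exact Finset.sum_congr rfl fun j _ => (smul_comm c _ _).symm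

end MatrixComplex

namespace BEAux

variable {A : Type u} [CommRing A]

lemma mv_mul {a b c : ℕ} (X : Matrix (Fin c) (Fin b) A) (Z : Matrix (Fin b) (Fin a) A)
    (M : Type u) [AddCommGroup M] [Module A M] (v : Fin a → M) :
    matVecMap (X * Z) M v = matVecMap X M (matVecMap Z M v) := by
  funext i
  show ∑ j, (X * Z) i j • v j = ∑ l, X i l • (∑ j, Z l j • v j)
  simp only [Matrix.mul_apply, Finset.sum_smul, Finset.smul_sum, mul_smul]
  rw [Finset.sum_comm]

lemma mv_one {a : ℕ} (M : Type u) [AddCommGroup M] [Module A M] (v : Fin a → M) :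
    matVecMap (1 : Matrix (Fin a) (Fin a) A) M v = v := by
  funext i
  show ∑ j, (1 : Matrix (Fin a) (Fin a) A) i j • v j = v i
  simp [Matrix.one_apply, ite_smul]

lemma mv_add {a b : ℕ} (X Z : Matrix (Fin b) (Fin a) A)
    (M : Type u) [AddCommGroup M] [Module A M] (v : Fin a → M) :
    matVecMap (X + Z) M v = matVecMap X M v + matVecMap Z M v := by
  funext i
  show ∑ j, (X i j + Z i j) • v j = (∑ j, X i j • v j) + ∑ j, Z i j • v j
  simp [add_smul, Finset.sum_add_distrib]

lemma mv_tower {a b : ℕ} (X : Matrix (Fin b) (Fin a) A) (R : Type u) [CommRing R] [Algebra A R]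
    (T : Type u) [AddCommGroup T] [Module A T] [Module R T] [IsScalarTower A R T]
    (v : Fin a → T) :
    matVecMap (X.map (algebraMap A R)) T v = matVecMap X T v := by
  funext i
  show ∑ j, (algebraMap A R (X i j)) • v j = ∑ j, X i j • v j
  exact Finset.sum_congr rfl fun j _ => algebraMap_smul R _ _

end BEAux

namespace BEAux2

variable {R : Type u} [CommRing R]

/-- Row selection: `Rsel ri * M = M.submatrix ri id`. -/
lemma rsel_mul {b t : ℕ} {γ : Type} [Fintype γ] (ri : Fin t → Fin b)
    (M : Matrix (Fin b) γ R) :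
    (1 : Matrix (Fin b) (Fin b) R).submatrix ri id * M = M.submatrix ri id := by
  have := Matrix.submatrix_mul (1 : Matrix (Fin b) (Fin b) R) M ri
    (id : Fin b → Fin b) (id : γ → γ) Function.bijective_id
  rw [Matrix.one_mul, Matrix.submatrix_id_id] at this
  exact this.symm

/-- Column selection: `M * Inj co = M.submatrix id co`. -/
lemma mul_csel {b s : ℕ} {γ : Type} [Fintype γ] (co : Fin s → Fin b)
    (M : Matrix γ (Fin b) R) :
    M * (1 : Matrix (Fin b) (Fin b) R).submatrix id co = M.submatrix id co := by
  have := Matrix.submatrix_mul M (1 : Matrix (Fin b) (Fin b) R)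
    (id : γ → γ) (id : Fin b → Fin b) co Function.bijective_id
  rw [Matrix.mul_one, Matrix.submatrix_id_id] at this
  exact this.symm

lemma step {a b t : ℕ}
    (Y : Matrix (Fin b) (Fin a) R) (G : Matrix (Fin a) (Fin t) R) (H : Matrix (Fin t) (Fin a) R)
    (hYGH : Y * (G * H) = Y)
    (ri : Fin t → Fin b) (ci : Fin t → Fin a)
    (hu : IsUnit ((Y.submatrix ri ci)).det) :
    ∃ S : Matrix (Fin a) (Fin b) R, S * Y = G * H ∧
      (∀ x : Fin b, (∀ k, ri k ≠ x) → ∀ l, S l x = 0) ∧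
      ((1 - Y * S).submatrix ri id = 0) := by
  have hYA : Y = (Y * G) * H := by rw [Matrix.mul_assoc, hYGH]
  set A := Y * G with hA
  set D := A.submatrix ri id with hD
  have hsub : Y.submatrix ri ci = D * H.submatrix id ci := by
    conv_lhs => rw [hYA]
    exact Matrix.submatrix_mul A H ri (id : Fin t → Fin t) ci Function.bijective_id
  have hDdet : IsUnit D.det := by
    have h2 : (Y.submatrix ri ci).det = D.det * (H.submatrix id ci).det := by
      rw [hsub, Matrix.det_mul]
    exact isUnit_of_mul_isUnit_left (h2 ▸ hu)
  haveI : Invertible D := D.invertibleOfIsUnitDet hDdet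
  have hRA : (1 : Matrix (Fin b) (Fin b) R).submatrix ri id * A = D := rsel_mul ri A
  refine ⟨G * (⅟D * (1 : Matrix (Fin b) (Fin b) R).submatrix ri id), ?_, ?_, ?_⟩
  · have h1 : (1 : Matrix (Fin b) (Fin b) R).submatrix ri id * Y = D * H := by
      conv_lhs => rw [hYA]
      rw [← Matrix.mul_assoc, hRA]
    calc G * (⅟D * (1 : Matrix (Fin b) (Fin b) R).submatrix ri id) * Y
        = G * (⅟D * ((1 : Matrix (Fin b) (Fin b) R).submatrix ri id * Y)) := by
          rw [Matrix.mul_assoc, Matrix.mul_assoc]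
      _ = G * (⅟D * D * H) := by rw [h1, Matrix.mul_assoc]
      _ = G * H := by rw [invOf_mul_self, Matrix.one_mul]
  · intro x hx l
    rw [Matrix.mul_apply]
    refine Finset.sum_eq_zero fun k _ => ?_
    have h0 : (⅟D * (1 : Matrix (Fin b) (Fin b) R).submatrix ri id) k x = 0 := by
      rw [Matrix.mul_apply]
      refine Finset.sum_eq_zero fun u _ => ?_
      simp [Matrix.one_apply, hx u]
    rw [h0, mul_zero]
  · have hYS : Y * (G * (⅟D * (1 : Matrix (Fin b) (Fin b) R).submatrix ri id))
        = A * (⅟D * (1 : Matrix (Fin b) (Fin b) R).submatrix ri id) := by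
      rw [← Matrix.mul_assoc Y G, ← hA]
    have h2 : (1 : Matrix (Fin b) (Fin b) R).submatrix ri id *
        (Y * (G * (⅟D * (1 : Matrix (Fin b) (Fin b) R).submatrix ri id)))
        = (1 : Matrix (Fin b) (Fin b) R).submatrix ri id := by
      rw [hYS, ← Matrix.mul_assoc, hRA, ← Matrix.mul_assoc, mul_invOf_self, Matrix.one_mul]
    have h3 := rsel_mul ri (1 - Y * (G * (⅟D * (1 : Matrix (Fin b) (Fin b) R).submatrix ri id)))
    rw [Matrix.mul_sub, Matrix.mul_one, h2, sub_self] at h3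
    exact h3.symm

lemma split {b t s : ℕ}
    (E : Matrix (Fin b) (Fin b) R) (ri : Fin t → Fin b) (co : Fin s → Fin b)
    (hco : Function.Injective co)
    (hpart : ∀ x : Fin b, (∃ k, ri k = x) ↔ ¬ ∃ u, co u = x)
    (hrow : E.submatrix ri id = 0)
    (hcol : ∀ (x : Fin b) (u : Fin s), E x (co u) = if x = co u then 1 else 0) :
    ∃ (G' : Matrix (Fin b) (Fin s) R) (H' : Matrix (Fin s) (Fin b) R),
      H' * G' = 1 ∧ G' * H' = E := by
  refine ⟨(1 : Matrix (Fin b) (Fin b) R).submatrix id co,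
    (1 : Matrix (Fin b) (Fin b) R).submatrix co id * E, ?_, ?_⟩
  · rw [Matrix.mul_assoc, mul_csel co E, rsel_mul co (E.submatrix id co)]
    ext u v
    simp only [Matrix.submatrix_apply, id_eq]
    rw [hcol (co u) v, Matrix.one_apply]
    simp [hco.eq_iff]
  · rw [rsel_mul co E]
    ext x y
    rw [Matrix.mul_apply]
    by_cases hx : ∃ u, co u = x
    · obtain ⟨u0, hu0⟩ := hx
      rw [Finset.sum_eq_single u0]
      · simp [Matrix.one_apply, hu0]
      · intro u _ hu
        have hne : ¬ x = co u := by
          rw [← hu0]; exact fun h => hu (hco h.symm)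
        simp [Matrix.one_apply, hne]
      · simp
    · obtain ⟨k, hk⟩ := (hpart x).mpr hx
      have hE : E x y = 0 := by
        have h4 := congrFun (congrFun hrow k) y
        simpa [hk] using h4
      rw [hE]
      refine Finset.sum_eq_zero fun u _ => ?_
      have hne : ¬ x = co u := fun h => hx ⟨u, h.symm⟩
      simp [Matrix.one_apply, hne]
lemma exists_compl {b t s : ℕ} (ri : Fin t → Fin b) (hri : Function.Injective ri)
    (hbs : b = s + t) :
    ∃ co : Fin s → Fin b, Function.Injective co ∧
      ∀ x : Fin b, (∃ k, ri k = x) ↔ ¬ ∃ u, co u = x := by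
  classical
  set C : Finset (Fin b) := Finset.univ \ Finset.image ri Finset.univ with hC
  have hcard : C.card = s := by
    rw [hC, Finset.card_sdiff_of_subset (Finset.subset_univ _), Finset.card_image_of_injective _ hri]
    simp [hbs]
  let e : C ≃ Fin s := C.equivFin.trans (finCongr hcard)
  refine ⟨fun u => (e.symm u : Fin b), ?_, ?_⟩
  · intro u v huv
    exact e.symm.injective (Subtype.ext huv)
  · intro x
    have hmem : (∃ u : Fin s, ((e.symm u : C) : Fin b) = x) ↔ x ∈ C := by
      constructor
      · rintro ⟨u, rfl⟩; exact (e.symm u).2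
      · intro hx; exact ⟨e ⟨x, hx⟩, by simp⟩
    rw [hmem, hC]
    simp [Finset.mem_sdiff, eq_comm]

end BEAux2

lemma extend3 {R : Type u} [CommRing R] {a b t s : ℕ}
    (Yk : Matrix (Fin b) (Fin a) R) (Sk : Matrix (Fin a) (Fin b) R)
    (ri : Fin t → Fin b) (hri : Function.Injective ri) (hbs : b = s + t)
    (hScol : ∀ x : Fin b, (∀ k, ri k ≠ x) → ∀ l, Sk l x = 0)
    (hErow : (1 - Yk * Sk).submatrix ri id = 0) :
    ∃ (G' : Matrix (Fin b) (Fin s) R) (H' : Matrix (Fin s) (Fin b) R),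
      H' * G' = 1 ∧ G' * H' = 1 - Yk * Sk := by
  obtain ⟨co, hco, hpart⟩ := BEAux2.exists_compl ri hri hbs
  have hcol : ∀ (x : Fin b) (u : Fin s),
      ((1 - Yk * Sk : Matrix (Fin b) (Fin b) R)) x (co u) = if x = co u then 1 else 0 := by
    intro x u
    have hS0 : ∀ l, Sk l (co u) = 0 := by
      refine hScol (co u) fun k' hk' => ?_
      exact ((hpart (co u)).mp ⟨k', hk'⟩) ⟨u, rfl⟩
    have hz : (Yk * Sk) x (co u) = 0 := by
      rw [Matrix.mul_apply]
      exact Finset.sum_eq_zero fun l _ => by rw [hS0 l, mul_zero]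
    rw [Matrix.sub_apply, hz, sub_zero, Matrix.one_apply]
  exact BEAux2.split (1 - Yk * Sk) ri co hco hpart hErow hcol

lemma buildS {R : Type u} [CommRing R] (n h : ℕ) (m r : ℕ → ℕ)
    (Y : ∀ j, Matrix (Fin (m (j+1))) (Fin (m j)) R)
    (hcx : ∀ j, j+2 ≤ n → Y (j+1) * Y j = 0)
    (ha : r 0 = m 0)
    (hb : ∀ j, j+1 < n → m (j+1) = r (j+1) + r j)
    (hu : ∀ j, j < n - h → ∃ (ri : Fin (r j) → Fin (m (j+1))) (ci : Fin (r j) → Fin (m j)),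
      Function.Injective ri ∧ Function.Injective ci ∧ IsUnit ((Y j).submatrix ri ci).det)
    (hhn : h < n) :
    ∃ S : ∀ j, Matrix (Fin (m j)) (Fin (m (j+1))) R,
      S 0 * Y 0 = 1 ∧ ∀ j, j+1 < n - h → Y j * S j + S (j+1) * Y (j+1) = 1 := by
  classical
  suffices key : ∀ k, k ≤ n - h → ∃ S : ∀ j, Matrix (Fin (m j)) (Fin (m (j+1))) R,
      (0 < k → S 0 * Y 0 = 1) ∧
      (∀ j, j + 1 < k → Y j * S j + S (j+1) * Y (j+1) = 1) ∧
      (∀ j, j < k → j + 1 < n →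
        ∃ (G : Matrix (Fin (m (j+1))) (Fin (r (j+1))) R)
          (H : Matrix (Fin (r (j+1))) (Fin (m (j+1))) R),
          H * G = 1 ∧ G * H = 1 - Y j * S j) by
    obtain ⟨S, h0, h1, _⟩ := key (n - h) le_rfl
    exact ⟨S, h0 (by omega), h1⟩
  intro k
  induction k with
  | zero => exact fun _ => ⟨fun j => 0, by omega, by omega, by omega⟩
  | succ k ih =>
    intro hk1
    obtain ⟨S, h0, h1, h2⟩ := ih (by omega)
    obtain ⟨ri, ci, hri, hci, hunit⟩ := hu k (by omega)
    rcases Nat.eq_zero_or_pos k with hk0 | hk0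
    · subst hk0
      -- base step : k = 0
      have hGH1 : (1 : Matrix (Fin (m 0)) (Fin (m 0)) R).submatrix id (finCongr ha) *
          (1 : Matrix (Fin (m 0)) (Fin (m 0)) R).submatrix (finCongr ha) id = 1 := by
        rw [Matrix.submatrix_mul_equiv (1 : Matrix (Fin (m 0)) (Fin (m 0)) R) 1 id
          (finCongr ha) id, Matrix.one_mul, Matrix.submatrix_id_id]
      have hYGH : Y 0 * ((1 : Matrix (Fin (m 0)) (Fin (m 0)) R).submatrix id (finCongr ha) *
          (1 : Matrix (Fin (m 0)) (Fin (m 0)) R).submatrix (finCongr ha) id) = Y 0 := by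
        rw [hGH1, Matrix.mul_one]
      obtain ⟨Sk, hSkY, hScol, hErow⟩ := BEAux2.step (Y 0) _ _ hYGH ri ci hunit
      rw [hGH1] at hSkY
      refine ⟨Function.update S 0 Sk, fun _ => ?_, by omega, ?_⟩
      · rw [Function.update_self]; exact hSkY
      · intro j hj hjn
        have hj0 : j = 0 := by omega
        subst hj0
        obtain ⟨G', H', hH'G', hG'H'⟩ := extend3 (Y 0) Sk ri hri (hb 0 hjn) hScol hErow
        exact ⟨G', H', hH'G', by rw [Function.update_self]; exact hG'H'⟩
    · -- inductive step : k = j' + 1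
      obtain ⟨j', rfl⟩ : ∃ j', k = j' + 1 := ⟨k - 1, by omega⟩
      obtain ⟨G, H, hHG, hGHe⟩ := h2 j' (by omega) (by omega)
      have hYGH : Y (j'+1) * (G * H) = Y (j'+1) := by
        rw [hGHe, Matrix.mul_sub, Matrix.mul_one, ← Matrix.mul_assoc,
          hcx j' (by omega), Matrix.zero_mul, sub_zero]
      obtain ⟨Sk, hSkY, hScol, hErow⟩ := BEAux2.step (Y (j'+1)) G H hYGH ri ci hunit
      rw [hGHe] at hSkY
      refine ⟨Function.update S (j'+1) Sk, fun _ => ?_, ?_, ?_⟩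
      · rw [Function.update_of_ne (by omega)]
        exact h0 hk0
      · intro j hj
        rcases Nat.lt_or_ge (j+1) (j'+1) with hjk | hjk
        · rw [Function.update_of_ne (by omega), Function.update_of_ne (by omega)]
          exact h1 j hjk
        · have hjj : j = j' := by omega
          subst hjj
          rw [Function.update_of_ne (by omega), Function.update_self, hSkY]
          abel
      · intro j hj hjn
        rcases Nat.lt_or_ge j (j'+1) with hjk | hjk
        · obtain ⟨G1, H1, hh1, hh2⟩ := h2 j hjk hjn
          exact ⟨G1, H1, hh1, by rw [Function.update_of_ne (by omega)]; exact hh2⟩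
        · have hjj : j = j' + 1 := by omega
          subst hjj
          obtain ⟨G', H', hH'G', hG'H'⟩ := extend3 (Y (j'+1)) Sk ri hri (hb (j'+1) hjn)
            hScol hErow
          exact ⟨G', H', hH'G', by rw [Function.update_self]; exact hG'H'⟩


/-- For a complex `0 → F^{-n} → ⋯ → F^0` of finitely generated free `A`-modules satisfying the
rank and height conditions (a), (b), (c), and a prime `p ∈ Supp M` with `h = ht_M p < n`, the
localized complex `0 → (F^{-n})_p → ⋯ → (F^{-h})_p` is split exact (it admits a contracting
homotopy); consequently for every `A_p`-module `T`, `H^q(F^• ⊗ T) = 0` for all `q < -h`. -/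
theorem split_exact_of_localized_buchsbaum_eisenbud_complex
    (A : Type u) [CommRing A] [IsNoetherianRing A]
    (M : Type u) [AddCommGroup M] [Module A M] [Module.Finite A M]
    (n : ℕ) (m : ℕ → ℕ) (X : (j : ℕ) → Matrix (Fin (m (j + 1))) (Fin (m j)) A)
    (hcx : ∀ j, j + 2 ≤ n → X (j + 1) * X j = 0)
    (ha : matrixRank (X 0) = m 0)
    (hb : ∀ j, j + 1 < n → m (j + 1) = matrixRank (X (j + 1)) + matrixRank (X j))
    (hc : ∀ j, j < n →
      ((n - j : ℕ) : ℕ∞) ≤ htMIdeal A M (minorsIdeal (matrixRank (X j)) (X j)))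
    (p : PrimeSpectrum A) (hp : p ∈ Module.support A M)
    (h : ℕ) (hh : (h : ℕ∞) = htM A M p) (hhn : h < n) :
    (∃ s : (j : ℕ) →
        ((Fin (m (j + 1)) → Localization.AtPrime p.asIdeal) →ₗ[Localization.AtPrime p.asIdeal]
          (Fin (m j) → Localization.AtPrime p.asIdeal)),
      (s 0).comp
          (matVecMap ((X 0).map (algebraMap A (Localization.AtPrime p.asIdeal)))
            (Localization.AtPrime p.asIdeal)) = LinearMap.id ∧
      ∀ j, j + 1 < n - h →
        (matVecMap ((X j).map (algebraMap A (Localization.AtPrime p.asIdeal)))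
              (Localization.AtPrime p.asIdeal)).comp (s j) +
          (s (j + 1)).comp
            (matVecMap ((X (j + 1)).map (algebraMap A (Localization.AtPrime p.asIdeal)))
              (Localization.AtPrime p.asIdeal)) = LinearMap.id) ∧
    (∀ (T : Type u) [AddCommGroup T] [Module A T]
        [Module (Localization.AtPrime p.asIdeal) T]
        [IsScalarTower A (Localization.AtPrime p.asIdeal) T],
      LinearMap.ker (matVecMap (X 0) T) = ⊥ ∧
      ∀ j, j + 1 < n - h →
        LinearMap.ker (matVecMap (X (j + 1)) T) ≤ LinearMap.range (matVecMap (X j) T)) := by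
  classical
  set R := Localization.AtPrime p.asIdeal with hRdef
  set r : ℕ → ℕ := fun j => matrixRank (X j) with hrdef
  set Y : ∀ j, Matrix (Fin (m (j+1))) (Fin (m j)) R :=
    fun j => (X j).map (algebraMap A R) with hYdef
  have hcx' : ∀ j, j+2 ≤ n → Y (j+1) * Y j = 0 := by
    intro j hj
    rw [hYdef]
    simp only
    rw [← Matrix.map_mul, hcx j hj]
    ext i l
    simp
  have hunit : ∀ j, j < n - h →
      ∃ (ri : Fin (r j) → Fin (m (j+1))) (ci : Fin (r j) → Fin (m j)),
        Function.Injective ri ∧ Function.Injective ci ∧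
        IsUnit ((Y j).submatrix ri ci).det := by
    intro j hj
    have hjn : j < n := by omega
    have hmlt : ¬ (minorsIdeal (r j) (X j) ≤ p.asIdeal) := by
      intro hle
      have hpz : p ∈ zeroLocus ((minorsIdeal (r j) (X j) : Set A)) :=
        (mem_zeroLocus _ _).mpr hle
      have hmem : htM A M p ∈
          htM A M '' (Module.support A M ∩ zeroLocus ((minorsIdeal (r j) (X j) : Set A))) :=
        ⟨p, ⟨hp, hpz⟩, rfl⟩
      have hle2 : htMIdeal A M (minorsIdeal (r j) (X j)) ≤ htM A M p := sInf_le hmem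
      rw [← hh] at hle2
      have hfin : ((n - j : ℕ) : ℕ∞) ≤ (h : ℕ∞) := le_trans (hc j hjn) hle2
      have := Nat.cast_le.mp hfin
      omega
    rw [minorsIdeal, Ideal.span_le] at hmlt
    have hex : ∃ d ∈ {d | ∃ (ri : Fin (r j) → Fin (m (j+1))) (ci : Fin (r j) → Fin (m j)),
        Function.Injective ri ∧ Function.Injective ci ∧ d = ((X j).submatrix ri ci).det},
        d ∉ p.asIdeal := by
      by_contra hcon
      push_neg at hcon
      exact hmlt fun d hd => hcon d hd
    obtain ⟨d, hdmem, hdp⟩ := hex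
    obtain ⟨ri, ci, hri, hci, rfl⟩ := hdmem
    refine ⟨ri, ci, hri, hci, ?_⟩
    have hu0 : IsUnit (algebraMap A R (((X j).submatrix ri ci).det)) :=
      IsLocalization.map_units R (⟨_, hdp⟩ : p.asIdeal.primeCompl)
    rw [RingHom.map_det] at hu0
    rw [hYdef]
    simp only
    rw [Matrix.submatrix_map]
    exact hu0
  obtain ⟨S, hS0, hS1⟩ := buildS n h m r Y hcx' ha
    (fun j hj => hb j hj) hunit hhn
  constructor
  · refine ⟨fun j => matVecMap (S j) R, ?_, ?_⟩
    · apply LinearMap.ext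
      intro v
      show matVecMap (S 0) R (matVecMap (Y 0) R v) = v
      rw [← BEAux.mv_mul, hS0, BEAux.mv_one]
    · intro j hj
      apply LinearMap.ext
      intro v
      show matVecMap (Y j) R (matVecMap (S j) R v)
          + matVecMap (S (j+1)) R (matVecMap (Y (j+1)) R v) = v
      rw [← BEAux.mv_mul, ← BEAux.mv_mul, ← BEAux.mv_add, hS1 j hj, BEAux.mv_one]
  · intro T _ _ _ _
    constructor
    · apply LinearMap.ker_eq_bot'.mpr
      intro v hv
      have hv' : matVecMap (Y 0) T v = 0 := by
        rw [hYdef]; simp only; rw [BEAux.mv_tower]; exact hv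
      calc v = matVecMap (1 : Matrix (Fin (m 0)) (Fin (m 0)) R) T v := (BEAux.mv_one T v).symm
        _ = matVecMap (S 0 * Y 0) T v := by rw [hS0]
        _ = matVecMap (S 0) T (matVecMap (Y 0) T v) := BEAux.mv_mul _ _ T v
        _ = 0 := by rw [hv', map_zero]
    · intro j hj v hv
      rw [LinearMap.mem_ker] at hv
      have hv' : matVecMap (Y (j+1)) T v = 0 := by
        rw [hYdef]; simp only; rw [BEAux.mv_tower]; exact hv
      rw [LinearMap.mem_range]
      refine ⟨matVecMap (S j) T v, ?_⟩
      calc matVecMap (X j) T (matVecMap (S j) T v)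
          = matVecMap (Y j) T (matVecMap (S j) T v) := by
            rw [hYdef]; simp only; rw [BEAux.mv_tower]
        _ = matVecMap (Y j * S j) T v := (BEAux.mv_mul _ _ T v).symm
        _ = matVecMap (Y j * S j) T v + matVecMap (S (j+1) * Y (j+1)) T v := by
            rw [BEAux.mv_mul (S (j+1)) (Y (j+1)) T v, hv', map_zero, add_zero]
        _ = matVecMap (Y j * S j + S (j+1) * Y (j+1)) T v := (BEAux.mv_add _ _ T v).symm
        _ = matVecMap (1 : Matrix (Fin (m (j+1))) (Fin (m (j+1))) R) T v := by rw [hS1 j hj]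
        _ = v := BEAux.mv_one T v
end
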